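/- Let I be an ideal of a commutative Noetherian ring R generated by elements f_1,...,f_s. Then for every n > 0, the Ratliff–Rush closure of I^n equals ∪_{m≥0} ( I^{n+m} : (f_1^m,...,f_s^m) ), i.e., an element x lies in some I^{n+m} : I^m if and only if x · f_i^m ∈ I^{n+m} for some m ≥ 0 and all i. -/

import Mathlib

open Finset in
lemma aux_prod_mem_pow_card {R : Type*} [CommRing R] (I : Ideal R) {ι : Type*}
    (g : ι → R) (t : Finset ι) (h : ∀ j ∈ t, g j ∈ I) :
    (∏ j ∈ t, g j) ∈ I ^ t.card := by
  classical
  induction t using Finset.cons_induction with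
  | empty => simp
  | cons a t ha ih =>
    rw [Finset.prod_cons, Finset.card_cons, pow_succ, mul_comm]
    exact Ideal.mul_mem_mul (h a (Finset.mem_cons_self a t))
      (ih fun j hj => h j (Finset.mem_cons_of_mem hj))

open Finset in
lemma aux_key {R : Type*} [CommRing R] {s : ℕ} (hs : 0 < s) (f : Fin s → R) (m : ℕ) :
    (Ideal.span (Set.range f)) ^ (s * m) ≤
      Ideal.span (Set.range fun i => f i ^ m) * (Ideal.span (Set.range f)) ^ (s * m - m) := by
  classical
  rw [Ideal.span, Submodule.span_pow, Submodule.span_le]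
  intro a ha
  obtain ⟨g, hg⟩ := Set.mem_pow.mp ha
  choose gi hgi using fun j : Fin (s * m) => (g j).2
  have : Nonempty (Fin s) := ⟨⟨0, hs⟩⟩
  obtain ⟨i, hi⟩ := Fintype.exists_le_card_fiber_of_mul_le_card (n := m) gi
    (le_of_eq (by simp [Fintype.card_fin]))
  set T : Finset (Fin (s * m)) := {x | gi x = i} with hT
  have hprod : a = ∏ j, f (gi j) := by
    rw [← hg, List.prod_ofFn]
    exact Finset.prod_congr rfl fun j _ => (hgi j).symm
  have hsplit : a = (∏ j ∈ T, f (gi j)) * ∏ j ∈ Tᶜ, f (gi j) := by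
    rw [hprod, Finset.prod_mul_prod_compl]
  have hTprod : (∏ j ∈ T, f (gi j)) = f i ^ T.card := by
    have hc : ∀ j ∈ T, f (gi j) = f i := by
      intro j hj
      rw [hT] at hj
      simp only [Finset.mem_filter, Finset.mem_univ, true_and] at hj
      rw [hj]
    rw [Finset.prod_congr rfl hc, Finset.prod_const]
  have hfi : f i ∈ Ideal.span (Set.range f) := Ideal.subset_span ⟨i, rfl⟩
  have hmem1 : f i ^ m ∈ Ideal.span (Set.range fun i => f i ^ m) :=
    Ideal.subset_span ⟨i, rfl⟩
  have hcardT : T.card + Tᶜ.card = s * m := by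
    rw [Finset.card_add_card_compl, Fintype.card_fin]
  have hrest : f i ^ (T.card - m) * ∏ j ∈ Tᶜ, f (gi j) ∈
      (Ideal.span (Set.range f)) ^ (s * m - m) := by
    have h1 : f i ^ (T.card - m) ∈ (Ideal.span (Set.range f)) ^ (T.card - m) :=
      Ideal.pow_mem_pow hfi _
    have h2 : (∏ j ∈ Tᶜ, f (gi j)) ∈ (Ideal.span (Set.range f)) ^ Tᶜ.card :=
      aux_prod_mem_pow_card _ _ _ fun j _ => Ideal.subset_span ⟨gi j, rfl⟩
    have := Ideal.mul_mem_mul h1 h2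
    rwa [← pow_add, show T.card - m + Tᶜ.card = s * m - m by omega] at this
  have ha' : a = f i ^ m * (f i ^ (T.card - m) * ∏ j ∈ Tᶜ, f (gi j)) := by
    rw [hsplit, hTprod, ← mul_assoc, ← pow_add, Nat.add_sub_cancel' hi]
  rw [ha']
  exact Ideal.mul_mem_mul hmem1 hrest

/-- For an ideal `I = (f_1,…,f_s)` of a commutative Noetherian ring and `n > 0`,
the Ratliff–Rush closure `∪_{m≥1} (I^{n+m} : I^m)` equals
`∪_{m≥0} (I^{n+m} : (f_1^m,…,f_s^m))`. -/
theorem stmt_4 {R : Type*} [CommRing R] [IsNoetherianRing R] {s : ℕ} (f : Fin s → R)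
    (n : ℕ) (hn : 0 < n) :
    (⨆ m : ℕ,
        Submodule.colon ((Ideal.span (Set.range f)) ^ (n + (m + 1)))
          (((Ideal.span (Set.range f)) ^ (m + 1) : Ideal R) : Set R)) =
      ⨆ m : ℕ,
        Submodule.colon ((Ideal.span (Set.range f)) ^ (n + m))
          (Ideal.span (Set.range fun i => f i ^ m)) := by
  classical
  set I := Ideal.span (Set.range f) with hI
  apply le_antisymm
  · -- each LHS term at index m is ≤ the RHS term at index m+1
    refine iSup_le fun m => le_iSup_of_le (m + 1) ?_
    intro x hx
    rw [Submodule.mem_colon] at hx ⊢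
    intro p hp
    refine hx p ?_
    have hle : Ideal.span (Set.range fun i => f i ^ (m + 1)) ≤ I ^ (m + 1) := by
      rw [Ideal.span_le]
      rintro a ⟨i, rfl⟩
      exact Ideal.pow_mem_pow (Ideal.subset_span (Set.mem_range_self i)) (m + 1)
    exact hle hp
  · refine iSup_le fun m => ?_
    rcases Nat.eq_zero_or_pos s with hs | hs
    · -- s = 0 : I = ⊥, and the LHS term at index 0 is `colon _ ⊥ = ⊤`
      refine le_trans le_top (le_iSup_of_le 0 ?_)
      intro x _
      rw [Submodule.mem_colon]
      intro p hp
      have hbot : I = ⊥ := by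
        subst hs
        simp [hI]
      rw [hbot] at hp
      simp only [pow_succ, Ideal.mul_bot, Ideal.mem_bot] at hp
      subst hp
      simp
    · -- s > 0 : use the key lemma; target LHS index s*m (exponent s*m+1)
      refine le_iSup_of_le (s * m) ?_
      intro x hx
      rw [Submodule.mem_colon] at hx
      have hxJ : Ideal.span {x} * Ideal.span (Set.range fun i => f i ^ m) ≤ I ^ (n + m) := by
        rw [Ideal.mul_le]
        intro r hr t ht
        obtain ⟨c, rfl⟩ := Ideal.mem_span_singleton'.mp hr
        have hxt : x * t ∈ I ^ (n + m) := by
          have := hx t ht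
          rwa [smul_eq_mul] at this
        have : c * x * t = c * (x * t) := by ring
        rw [this]
        exact Ideal.mul_mem_left _ _ hxt
      have h1 : Ideal.span {x} * I ^ (s * m) ≤ I ^ (n + s * m) := by
        calc Ideal.span {x} * I ^ (s * m)
            ≤ Ideal.span {x} * (Ideal.span (Set.range fun i => f i ^ m) * I ^ (s * m - m)) :=
              Ideal.mul_mono_right (aux_key hs f m)
          _ = (Ideal.span {x} * Ideal.span (Set.range fun i => f i ^ m)) * I ^ (s * m - m) :=
              (mul_assoc _ _ _).symm
          _ ≤ I ^ (n + m) * I ^ (s * m - m) := Ideal.mul_mono_left hxJ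
          _ = I ^ (n + s * m) := by
              rw [← pow_add]
              congr 1
              have : m ≤ s * m := Nat.le_mul_of_pos_left m hs
              omega
      have h2 : Ideal.span {x} * I ^ (s * m + 1) ≤ I ^ (n + (s * m + 1)) := by
        calc Ideal.span {x} * I ^ (s * m + 1)
            = (Ideal.span {x} * I ^ (s * m)) * I := by rw [pow_succ, mul_assoc]
          _ ≤ I ^ (n + s * m) * I := Ideal.mul_mono_left h1
          _ = I ^ (n + (s * m + 1)) := by rw [← pow_succ, ← add_assoc]
      rw [Submodule.mem_colon]
      intro p hp
      rw [smul_eq_mul]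
      exact h2 (Ideal.mul_mem_mul (Ideal.mem_span_singleton_self x) hp)
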